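/- For the GHZ state mixed with white noise, ρ_p = (1−p)|GHZ_n⟩⟨GHZ_n| + p I/2^n, setting α = 2^{m−1}/(2^{m−1}−1), the witness value (α+1)(1−p) + α p/2^{n−1} exceeds the m-separable bound 2^{m−1}/(2^{m−1}−1) if and only if p < (2^m − 2)/(2(2^m − 2^{m−n} − 1)). -/

import Mathlib

/-- For the white-noise mixed GHZ state with `α = 2^{m−1}/(2^{m−1}−1)`, the witness value
`(α+1)(1−p) + αp/2^{n−1}` exceeds the `m`-separable bound `2^{m−1}/(2^{m−1}−1)` iff
`p < (2^m − 2)/(2(2^m − 2^{m−n} − 1))`. -/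
theorem stmt11 (n m : ℕ) (hn : 2 ≤ n) (hm : 2 ≤ m) (hmn : m ≤ n)
    (p : ℝ) (hp : p ∈ Set.Icc (0 : ℝ) 1) :
    ((2 : ℝ) ^ (m - 1) / ((2 : ℝ) ^ (m - 1) - 1) + 1) * (1 - p)
        + ((2 : ℝ) ^ (m - 1) / ((2 : ℝ) ^ (m - 1) - 1)) * p / 2 ^ (n - 1)
      > (2 : ℝ) ^ (m - 1) / ((2 : ℝ) ^ (m - 1) - 1) ↔
    p < ((2 : ℝ) ^ m - 2) / (2 * ((2 : ℝ) ^ m - (2 : ℝ) ^ ((m : ℤ) - n) - 1)) := by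
  set x : ℝ := (2 : ℝ) ^ (m - 1) with hxdef
  set y : ℝ := (2 : ℝ) ^ (n - 1) with hydef
  have hxm : (2 : ℝ) ^ m = 2 * x := by
    rw [hxdef, ← pow_succ']
    congr 1
    omega
  have hyn : (2 : ℝ) ^ n = 2 * y := by
    rw [hydef, ← pow_succ']
    congr 1
    omega
  have hz : (2 : ℝ) ^ ((m : ℤ) - n) = x / y := by
    rw [zpow_sub₀ (by norm_num : (2:ℝ) ≠ 0), zpow_natCast, zpow_natCast, hxm, hyn]
    rw [mul_div_mul_left _ _ (by norm_num : (2:ℝ) ≠ 0)]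
  rw [hxm, hz]
  have hx2 : (2 : ℝ) ≤ x := by
    calc (2:ℝ) = 2 ^ 1 := by norm_num
    _ ≤ x := by
      rw [hxdef]
      exact pow_le_pow_right₀ (by norm_num) (by omega)
  have hy2 : (2 : ℝ) ≤ y := by
    calc (2:ℝ) = 2 ^ 1 := by norm_num
    _ ≤ y := by
      rw [hydef]
      exact pow_le_pow_right₀ (by norm_num) (by omega)
  have hx1 : (0 : ℝ) < x - 1 := by linarith
  have hy0 : (0 : ℝ) < y := by linarith
  have hxy : x / y ≤ x := by
    rw [div_le_iff₀ hy0]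
    nlinarith
  have hxy0 : 0 < x / y := by positivity
  have hB : (0 : ℝ) < 2 * (2 * x - x / y - 1) := by nlinarith
  have hcancel : x / y * y = x := div_mul_cancel₀ x (by positivity)
  have key : ((x / (x - 1) + 1) * (1 - p) + x / (x - 1) * p / y) - x / (x - 1)
      = ((x - 1) * y - p * ((2 * x - 1) * y - x)) / ((x - 1) * y) := by
    field_simp
    ring
  have h1 : ((x / (x - 1) + 1) * (1 - p) + x / (x - 1) * p / y > x / (x - 1))
      ↔ 0 < (x - 1) * y - p * ((2 * x - 1) * y - x) := by
    rw [gt_iff_lt, ← sub_pos, key, lt_div_iff₀ (by positivity), zero_mul]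
  rw [h1, lt_div_iff₀ hB]
  constructor
  · intro h
    rw [← mul_lt_mul_iff_of_pos_right hy0]
    have e : (2 * (2 * x - x / y - 1)) * y = 2 * (2 * x * y - x - y) := by
      field_simp
    rw [mul_assoc p _ y, e]
    nlinarith [h]
  · intro h
    have h2 : p * (2 * (2 * x - x / y - 1)) * y < (2 * x - 2) * y :=
      mul_lt_mul_of_pos_right h hy0
    nlinarith [hcancel]
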